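/- Let σ̃ = {ṽ_0,…,ṽ_k} ⊂ ℝ^n be a k-simplex and ℓ_{ij} symmetric positive numbers with | ‖ṽ_i − ṽ_j‖ − ℓ_{ij} | ≤ C_0 L(σ̃) for all i < j, where C_0 = η Θ(σ̃)²/4, 0 ≤ η ≤ 1. Then there exists a Euclidean k-simplex σ = {v_0,…,v_k} with ‖v_i − v_j‖ = ℓ_{ij} for all i ≠ j, and it satisfies σ_k(P) ≥ (1 − η) σ_k(P̃) and Θ(σ) ≥ (4/(5√k)) (1 − η) Θ(σ̃). -/

import Mathlib

noncomputable section

open Metric Matrix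

/-- The altitude of vertex `i` of the simplex with vertices `v`: the distance
from `v i` to the affine hull of the opposite facet. -/
def altitude {m k : ℕ} (v : Fin (k + 1) → EuclideanSpace ℝ (Fin m)) (i : Fin (k + 1)) : ℝ :=
  Metric.infDist (v i) (affineSpan ℝ (v '' {j | j ≠ i}) : Set (EuclideanSpace ℝ (Fin m)))

/-- The longest edge length of the simplex with vertices `v`. -/
def longestEdge {m k : ℕ} (v : Fin (k + 1) → EuclideanSpace ℝ (Fin m)) : ℝ :=
  sSup {d : ℝ | ∃ i j, d = dist (v i) (v j)}

/-- The thickness of the simplex with vertices `v`. -/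
def thickness {m k : ℕ} (v : Fin (k + 1) → EuclideanSpace ℝ (Fin m)) : ℝ :=
  if k = 0 then 1 else (sInf (Set.range (altitude v))) / (k * longestEdge v)

/-- The `m × k` matrix whose `j`-th column is `v (j+1) - v 0`. -/
def edgeMat {m k : ℕ} (v : Fin (k + 1) → EuclideanSpace ℝ (Fin m)) :
    Matrix (Fin m) (Fin k) ℝ :=
  Matrix.of fun i j => (v j.succ - v 0) i

/-- The smallest singular value of a matrix: the infimum of `‖P x‖` over unit
vectors `x` (Euclidean norms). -/
def smallestSing {m k : ℕ} (P : Matrix (Fin m) (Fin k) ℝ) : ℝ :=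
  sInf { r : ℝ | ∃ x : EuclideanSpace ℝ (Fin k), ‖x‖ = 1 ∧
    r = ‖(EuclideanSpace.equiv (Fin m) ℝ).symm (P.mulVec (EuclideanSpace.equiv (Fin k) ℝ x))‖ }


-- ===== auxiliary lemmas =====

section Aux

open Finset

variable {E : Type*} [NormedAddCommGroup E] [InnerProductSpace ℝ E]

lemma AES.normsq_sum_smul {m : ℕ} (w : Fin m → E) (x : Fin m → ℝ) :
    ‖∑ j, x j • w j‖^2 = ∑ i, ∑ j, x i * x j * (inner ℝ (w i) (w j) : ℝ) := by
  rw [← real_inner_self_eq_norm_sq, sum_inner]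
  refine Finset.sum_congr rfl fun i _ => ?_
  rw [inner_sum]
  refine Finset.sum_congr rfl fun j _ => ?_
  rw [real_inner_smul_left, real_inner_smul_right]; ring

lemma AES.inner_sub_sub_dist (a b c : E) :
    (inner ℝ (a - c) (b - c) : ℝ) = (dist c a ^ 2 + dist c b ^ 2 - dist a b ^ 2) / 2 := by
  have h1 : a - b = (a - c) - (b - c) := by abel
  have h2 : ‖(a - c) - (b - c)‖ ^ 2
      = ‖a - c‖ ^ 2 - 2 * (inner ℝ (a - c) (b - c) : ℝ) + ‖b - c‖ ^ 2 := norm_sub_sq_real _ _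
  rw [dist_eq_norm, dist_eq_norm, dist_eq_norm, norm_sub_rev c a, norm_sub_rev c b, h1, h2]
  ring

lemma AES.normsq_comb {m N : ℕ} (u : Fin N → EuclideanSpace ℝ (Fin m)) (b : Fin N)
    (x : Fin N → ℝ) :
    ‖∑ j, x j • (u j - u b)‖^2
      = ∑ i, ∑ j, x i * x j *
          ((dist (u b) (u i) ^ 2 + dist (u b) (u j) ^ 2 - dist (u i) (u j) ^ 2) / 2) := by
  rw [AES.normsq_sum_smul]
  exact Finset.sum_congr rfl fun i _ => Finset.sum_congr rfl fun j _ => by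
    rw [AES.inner_sub_sub_dist]

lemma AES.comb_ge_altitude {m k : ℕ} (u : Fin (k+1) → EuclideanSpace ℝ (Fin m)) (b i : Fin (k+1))
    (hib : i ≠ b) (x : Fin (k+1) → ℝ) :
    |x i| * altitude u i ≤ ‖∑ j, x j • (u j - u b)‖ := by
  rcases eq_or_ne (x i) 0 with h0 | h0
  · simp [h0]
  set w : Fin (k+1) → EuclideanSpace ℝ (Fin m) := fun j => u j - u b with hw
  set S := affineSpan ℝ (u '' {j | j ≠ i}) with hS
  have hmem : ∀ j : Fin (k+1), j ≠ i → u j ∈ S := fun j hj =>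
    subset_affineSpan ℝ _ ⟨j, hj, rfl⟩
  have hwdir : ∀ j : Fin (k+1), j ≠ i → w j ∈ S.direction := by
    intro j hj
    have := AffineSubspace.vsub_mem_direction (hmem j hj) (hmem b (Ne.symm hib))
    simpa [hw] using this
  set q : EuclideanSpace ℝ (Fin m) := u i - (x i)⁻¹ • ∑ j, x j • w j with hq
  have hqS : q ∈ S := by
    have hdir : q - u b ∈ S.direction := by
      have heq : q - u b = ∑ j, ((if j = i then 1 else 0) - (x i)⁻¹ * x j) • w j := by
        have hwi : w i = u i - u b := rfl
        simp only [sub_smul, Finset.sum_sub_distrib, ite_smul, one_smul, zero_smul,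
          Finset.sum_ite_eq', Finset.mem_univ, if_true, hq, Finset.smul_sum, smul_smul]
        rw [sub_right_comm]
      rw [heq]
      refine Submodule.sum_mem _ fun j _ => ?_
      rcases eq_or_ne j i with rfl | hj
      · simp [inv_mul_cancel₀ h0]
      · exact Submodule.smul_mem _ _ (hwdir j hj)
    have : (q - u b) +ᵥ u b ∈ S :=
      AffineSubspace.vadd_mem_of_mem_direction hdir (hmem b (Ne.symm hib))
    simpa using this
  have halt : altitude u i ≤ dist (u i) q := Metric.infDist_le_dist_of_mem hqS
  have hdq : dist (u i) q = |x i|⁻¹ * ‖∑ j, x j • w j‖ := by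
    rw [dist_eq_norm, hq]
    simp [norm_smul, abs_inv]
  calc |x i| * altitude u i ≤ |x i| * (|x i|⁻¹ * ‖∑ j, x j • w j‖) := by
        apply mul_le_mul_of_nonneg_left _ (abs_nonneg _)
        rw [← hdq]; exact halt
    _ = ‖∑ j, x j • w j‖ := by
        field_simp

lemma AES.altitude_ge {m k : ℕ} (u : Fin (k+1) → EuclideanSpace ℝ (Fin m)) (b i : Fin (k+1))
    (hib : i ≠ b) (c : ℝ)
    (h : ∀ x : Fin (k+1) → ℝ, x b = 0 → x i = 1 → c ≤ ‖∑ j, x j • (u j - u b)‖) :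
    c ≤ altitude u i := by
  classical
  set w : Fin (k+1) → EuclideanSpace ℝ (Fin m) := fun j => u j - u b with hw
  set S := affineSpan ℝ (u '' {j | j ≠ i}) with hS
  have hmem : ∀ j : Fin (k+1), j ≠ i → u j ∈ S := fun j hj =>
    subset_affineSpan ℝ _ ⟨j, hj, rfl⟩
  have hSne : (S : Set (EuclideanSpace ℝ (Fin m))).Nonempty := ⟨u b, hmem b (Ne.symm hib)⟩
  rw [altitude]
  refine le_of_not_gt fun hlt => ?_
  obtain ⟨p, hp, hdp⟩ := (Metric.infDist_lt_iff hSne).1 hlt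
  have hbmem : u b ∈ u '' {j | j ≠ i} := ⟨b, Ne.symm hib, rfl⟩
  have himg : (fun x => x -ᵥ u b) '' (u '' {j | j ≠ i})
      = Set.range fun s : {j : Fin (k+1) // j ≠ i} => w ↑s := by
    rw [Set.image_image, Set.image_eq_range]
    simp only [vsub_eq_sub]
    rfl
  have hdirspan : S.direction
      = Submodule.span ℝ (Set.range fun s : {j : Fin (k+1) // j ≠ i} => w ↑s) := by
    rw [hS, direction_affineSpan, vectorSpan_eq_span_vsub_set_right ℝ hbmem, himg]
  have hy : p - u b ∈ S.direction := by
    have := AffineSubspace.vsub_mem_direction hp (hmem b (Ne.symm hib))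
    simpa using this
  rw [hdirspan, Submodule.mem_span_range_iff_exists_fun] at hy
  obtain ⟨cc, hcc⟩ := hy
  set x : Fin (k+1) → ℝ := fun j => if hj : j = i then 1 else if j = b then 0 else -cc ⟨j, hj⟩
    with hx
  have hxb : x b = 0 := by simp [hx, Ne.symm hib]
  have hxi : x i = 1 := by simp [hx]
  have hkey : ∑ j, x j • w j = u i - p := by
    have hsplit : ∑ j, x j • w j = x i • w i + ∑ j ∈ Finset.univ.erase i, x j • w j :=
      (Finset.add_sum_erase _ _ (Finset.mem_univ i)).symm
    have hsub : ∑ j ∈ Finset.univ.erase i, x j • w j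
        = -∑ j ∈ Finset.univ.erase i, (if hj : j = i then 0 else cc ⟨j, hj⟩) • w j := by
      rw [← Finset.sum_neg_distrib]
      refine Finset.sum_congr rfl fun j hj => ?_
      have hji : j ≠ i := (Finset.mem_erase.1 hj).1
      rcases eq_or_ne j b with rfl | hjb
      · simp [hw]
      · simp [hx, hji, hjb]
    have hsubty : ∑ j ∈ Finset.univ.erase i, (if hj : j = i then 0 else cc ⟨j, hj⟩) • w j
        = ∑ s : {j : Fin (k+1) // j ≠ i}, cc s • w ↑s := by
      rw [Finset.sum_subtype (p := fun j => j ≠ i) _ (fun j => by simp)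
        (fun j => (if hj : j = i then 0 else cc ⟨j, hj⟩) • w j)]
      exact Finset.sum_congr rfl fun s _ => by
        rcases s with ⟨j, hj⟩; simp [hj]
    rw [hsplit, hsub, hsubty, hcc, hxi, one_smul, hw]
    simp only []; abel
  have hle : c ≤ ‖u i - p‖ := by rw [← hkey]; exact h x hxb hxi
  rw [← dist_eq_norm] at hle
  exact absurd hdp (not_lt.2 hle)

noncomputable def AES.embv {n : ℕ} (k : ℕ) (c : Fin k → ℝ) : EuclideanSpace ℝ (Fin n) :=
  WithLp.toLp 2 (fun i : Fin n => if h : (i:ℕ) < k then c ⟨i, h⟩ else 0)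

lemma AES.sum_emb {n k : ℕ} (h : k ≤ n) (f : Fin k → ℝ) :
    ∑ i : Fin n, (if hi : (i:ℕ) < k then f ⟨i, hi⟩ else 0) = ∑ j : Fin k, f j := by
  have h2 : ∑ j : Fin k, f j
      = ∑ i ∈ Finset.univ.map (Fin.castLEEmb h),
          (if hi : (i:ℕ) < k then f ⟨i, hi⟩ else 0) := by
    rw [Finset.sum_map]
    refine (Finset.sum_congr rfl fun j _ => ?_)
    simp [Fin.castLEEmb, Fin.castLE, j.isLt]
  rw [h2]
  refine (Finset.sum_subset (Finset.subset_univ _) ?_).symm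
  intro i _ hi
  rw [dif_neg]
  intro hik
  exact hi (by
    simp only [Finset.mem_map, Finset.mem_univ, true_and]
    exact ⟨⟨(i:ℕ), hik⟩, by simp [Fin.castLEEmb, Fin.castLE, Fin.ext_iff]⟩)

lemma AES.apply_sum {n N : ℕ} (v : Fin N → EuclideanSpace ℝ (Fin n)) (i : Fin n) :
    (∑ j, v j) i = ∑ j, v j i := by
  classical
  induction (Finset.univ : Finset (Fin N)) using Finset.induction with
  | empty => rfl
  | insert _ _ hx ih =>
      rename_i a s
      rw [Finset.sum_insert hx, Finset.sum_insert hx, ← ih]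
      rfl

lemma AES.embv_sub {n k : ℕ} (c c' : Fin k → ℝ) :
    (AES.embv k c : EuclideanSpace ℝ (Fin n)) - AES.embv k c' = AES.embv k (c - c') := by
  ext i
  show AES.embv k c i - AES.embv k c' i = AES.embv k (c - c') i
  simp only [AES.embv, PiLp.toLp_apply]
  rcases Nat.lt_or_ge (i : ℕ) k with h | h
  · rw [dif_pos h, dif_pos h, dif_pos h]; rfl
  · rw [dif_neg (not_lt.2 h), dif_neg (not_lt.2 h), dif_neg (not_lt.2 h)]; simp

lemma AES.embv_inner {n k : ℕ} (h : k ≤ n) (c c' : Fin k → ℝ) :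
    (inner ℝ (AES.embv k c : EuclideanSpace ℝ (Fin n)) (AES.embv k c') : ℝ) = ∑ j, c j * c' j := by
  rw [PiLp.inner_apply]
  rw [← AES.sum_emb h (fun j => c j * c' j)]
  refine Finset.sum_congr rfl fun i _ => ?_
  simp only [AES.embv, PiLp.toLp_apply, RCLike.inner_apply, conj_trivial]
  rcases Nat.lt_or_ge (i : ℕ) k with hh | hh
  · rw [dif_pos hh, dif_pos hh, dif_pos hh, mul_comm]
  · rw [dif_neg (not_lt.2 hh), dif_neg (not_lt.2 hh), dif_neg (not_lt.2 hh), mul_zero]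

lemma AES.norm_mulVec {n k : ℕ} (u : Fin (k+1) → EuclideanSpace ℝ (Fin n))
    (y : EuclideanSpace ℝ (Fin k)) :
    ‖(EuclideanSpace.equiv (Fin n) ℝ).symm ((edgeMat u).mulVec ((EuclideanSpace.equiv (Fin k) ℝ) y))‖
      = ‖∑ j : Fin k, y j • (u j.succ - u 0)‖ := by
  congr 1
  ext i
  show ((edgeMat u).mulVec y) i = (∑ j : Fin k, y j • (u j.succ - u 0)) i
  rw [AES.apply_sum]
  simp only [Matrix.mulVec, dotProduct, edgeMat, Matrix.of_apply]
  refine Finset.sum_congr rfl fun j _ => ?_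
  show (u j.succ - u 0) i * y j = (y j • (u j.succ - u 0)) i
  rw [mul_comm]
  rfl

lemma AES.edge_bddAbove {m k : ℕ} (u : Fin (k+1) → EuclideanSpace ℝ (Fin m)) :
    BddAbove {d : ℝ | ∃ i j, d = dist (u i) (u j)} := by
  apply Set.Finite.bddAbove
  apply (Set.finite_range (fun p : Fin (k+1) × Fin (k+1) => dist (u p.1) (u p.2))).subset
  rintro z ⟨i, j, rfl⟩
  exact ⟨(i, j), rfl⟩

lemma AES.dist_le_longestEdge {m k : ℕ} (u : Fin (k+1) → EuclideanSpace ℝ (Fin m))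
    (i j : Fin (k+1)) : dist (u i) (u j) ≤ longestEdge u :=
  le_csSup (AES.edge_bddAbove u) ⟨i, j, rfl⟩

lemma AES.longestEdge_nonneg {m k : ℕ} (u : Fin (k+1) → EuclideanSpace ℝ (Fin m)) :
    0 ≤ longestEdge u :=
  le_trans dist_nonneg (AES.dist_le_longestEdge u 0 0)

lemma AES.longestEdge_le {m k : ℕ} (u : Fin (k+1) → EuclideanSpace ℝ (Fin m)) (c : ℝ)
    (hc : ∀ i j, dist (u i) (u j) ≤ c) : longestEdge u ≤ c := by
  refine csSup_le ⟨0, 0, 0, by simp⟩ ?_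
  rintro z ⟨i, j, rfl⟩
  exact hc i j

lemma AES.smallestSing_nonneg {m k : ℕ} (P : Matrix (Fin m) (Fin k) ℝ) :
    0 ≤ smallestSing P := by
  apply Real.sInf_nonneg
  rintro z ⟨y, hy, rfl⟩
  exact norm_nonneg _

lemma AES.altitude_nonneg {m k : ℕ} (u : Fin (k+1) → EuclideanSpace ℝ (Fin m)) (i : Fin (k+1)) :
    0 ≤ altitude u i := Metric.infDist_nonneg

lemma AES.thickness_nonneg {m k : ℕ} (u : Fin (k+1) → EuclideanSpace ℝ (Fin m)) :
    0 ≤ thickness u := by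
  rw [thickness]
  split
  · norm_num
  · apply div_nonneg
    · apply Real.sInf_nonneg
      rintro z ⟨i, rfl⟩
      exact AES.altitude_nonneg u i
    · exact mul_nonneg (Nat.cast_nonneg _) (AES.longestEdge_nonneg u)

lemma AES.sInf_alt_le {m k : ℕ} (u : Fin (k+1) → EuclideanSpace ℝ (Fin m)) (i : Fin (k+1)) :
    sInf (Set.range (altitude u)) ≤ altitude u i :=
  csInf_le (Set.finite_range _).bddBelow ⟨i, rfl⟩

lemma AES.quad_pert {N : ℕ} (x : Fin N → ℝ) (A : Fin N → Fin N → ℝ) (M : ℝ) (hM : 0 ≤ M)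
    (hA : ∀ i j, |A i j| ≤ M) :
    |∑ i, ∑ j, x i * x j * A i j| ≤ M * (∑ i, |x i|)^2 := by
  calc |∑ i, ∑ j, x i * x j * A i j| ≤ ∑ i, |∑ j, x i * x j * A i j| :=
        Finset.abs_sum_le_sum_abs _ _
    _ ≤ ∑ i, ∑ j, |x i * x j * A i j| :=
        Finset.sum_le_sum fun i _ => Finset.abs_sum_le_sum_abs _ _
    _ ≤ ∑ i, ∑ j, |x i| * |x j| * M := by
        refine Finset.sum_le_sum fun i _ => Finset.sum_le_sum fun j _ => ?_
        rw [abs_mul, abs_mul]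
        exact mul_le_mul_of_nonneg_left (hA i j) (by positivity)
    _ = M * (∑ i, |x i|)^2 := by
        rw [sq, Finset.sum_mul_sum]
        rw [Finset.mul_sum]
        refine Finset.sum_congr rfl fun i _ => ?_
        rw [Finset.mul_sum]
        refine Finset.sum_congr rfl fun j _ => ?_
        ring

lemma AES.sum_abs_sq_le {N : ℕ} (x : Fin (N+1) → ℝ) (b : Fin (N+1)) (hxb : x b = 0) :
    (∑ i, |x i|)^2 ≤ N * ∑ i, x i ^ 2 := by
  classical
  have h1 : ∑ i, |x i| = ∑ i ∈ Finset.univ.erase b, |x i| := by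
    rw [← Finset.add_sum_erase _ _ (Finset.mem_univ b), hxb, abs_zero, zero_add]
  have h2 : (∑ i ∈ Finset.univ.erase b, |x i|)^2
      ≤ (Finset.univ.erase b).card * ∑ i ∈ Finset.univ.erase b, |x i| ^ 2 :=
    sq_sum_le_card_mul_sum_sq
  have h3 : (Finset.univ.erase b).card = N := by
    rw [Finset.card_erase_of_mem (Finset.mem_univ b), Finset.card_univ, Fintype.card_fin]
    simp
  have h4 : ∑ i ∈ Finset.univ.erase b, |x i| ^ 2 ≤ ∑ i, x i ^ 2 := by
    refine le_trans (le_of_eq (Finset.sum_congr rfl fun i _ => sq_abs (x i)))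
      (Finset.sum_le_sum_of_subset_of_nonneg (Finset.subset_univ _)
        fun i _ _ => sq_nonneg _)
  calc (∑ i, |x i|)^2 = (∑ i ∈ Finset.univ.erase b, |x i|)^2 := by rw [h1]
    _ ≤ N * ∑ i ∈ Finset.univ.erase b, |x i| ^ 2 := by rw [h3] at h2; exact h2
    _ ≤ N * ∑ i, x i ^ 2 := by
        apply mul_le_mul_of_nonneg_left h4 (Nat.cast_nonneg N)

open scoped MatrixOrder in
lemma AES.psd_factor {k : ℕ} {G : Matrix (Fin k) (Fin k) ℝ} (h : G.PosSemidef) :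
    ∃ B : Matrix (Fin k) (Fin k) ℝ, G = Bᴴ * B := by
  classical
  obtain ⟨B, rfl⟩ := CStarAlgebra.nonneg_iff_eq_star_mul_self.mp h.nonneg
  exact ⟨B, rfl⟩

end Aux

set_option maxHeartbeats 4000000 in
/-- **Abstract Euclidean simplex.**  Numbers `ℓ i j` close to the edge lengths of a
simplex `vt` are realisable as edge lengths of a Euclidean simplex, whose quality
is controlled by that of `vt`. -/
theorem abstract_euclidean_simplex {n k : ℕ}
    (vt : Fin (k + 1) → EuclideanSpace ℝ (Fin n)) (ℓ : Fin (k + 1) → Fin (k + 1) → ℝ)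
    (hsymm : ∀ i j, ℓ i j = ℓ j i) (hpos : ∀ i j, i ≠ j → 0 < ℓ i j)
    (C₀ η : ℝ) (hη0 : 0 ≤ η) (hη1 : η ≤ 1) (hC₀ : C₀ = η * thickness vt ^ 2 / 4)
    (hdist : ∀ i j : Fin (k + 1), i < j →
      |dist (vt i) (vt j) - ℓ i j| ≤ C₀ * longestEdge vt) :
    ∃ v : Fin (k + 1) → EuclideanSpace ℝ (Fin n),
      (∀ i j, i ≠ j → dist (v i) (v j) = ℓ i j) ∧
      smallestSing (edgeMat v) ≥ (1 - η) * smallestSing (edgeMat vt) ∧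
      thickness v ≥ 4 / (5 * Real.sqrt k) * (1 - η) * thickness vt := by
  classical
  by_cases hk : k = 0
  · -- trivial case: a point
    subst hk
    refine ⟨vt, fun i j hij => absurd (by omega : i = j) hij, ?_, ?_⟩
    · have hempty : ∀ P : Matrix (Fin n) (Fin 0) ℝ, smallestSing P = 0 := by
        intro P
        have : { r : ℝ | ∃ x : EuclideanSpace ℝ (Fin 0), ‖x‖ = 1 ∧
            r = ‖(EuclideanSpace.equiv (Fin n) ℝ).symm (P.mulVec (EuclideanSpace.equiv (Fin 0) ℝ x))‖ } = ∅ := by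
          ext r
          simp only [Set.mem_setOf_eq, Set.mem_empty_iff_false, iff_false, not_exists]
          intro x hx
          exfalso
          have : x = 0 := Subsingleton.elim x 0
          rw [this, norm_zero] at hx
          norm_num at hx
        rw [smallestSing, this, Real.sInf_empty]
      rw [hempty]
      simp
    · have : Real.sqrt ((0:ℕ):ℝ) = 0 := by norm_num
      rw [this]
      have ht : thickness vt = 1 := by rw [thickness]; simp
      rw [ht]
      norm_num
  by_cases hC : η * thickness vt ^ 2 = 0
  · -- C₀ = 0 : the lengths agree exactly with those of vt
    have hC0 : C₀ = 0 := by rw [hC₀, hC]; norm_num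
    have hde : ∀ i j, i ≠ j → dist (vt i) (vt j) = ℓ i j := by
      intro i j hij
      rcases lt_or_gt_of_ne hij with h | h
      · have := hdist i j h
        rw [hC0, zero_mul] at this
        have := abs_nonpos_iff.mp this
        linarith [sub_eq_zero.mp this]
      · have := hdist j i h
        rw [hC0, zero_mul] at this
        have h2 := abs_nonpos_iff.mp this
        rw [dist_comm, hsymm i j]
        linarith [sub_eq_zero.mp h2]
    refine ⟨vt, hde, ?_, ?_⟩
    · have h0 : 0 ≤ smallestSing (edgeMat vt) := AES.smallestSing_nonneg _
      nlinarith
    · have h0 : 0 ≤ thickness vt := AES.thickness_nonneg vt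
      have hk1 : (1:ℝ) ≤ (k:ℝ) := by
        have : 1 ≤ k := Nat.one_le_iff_ne_zero.2 hk
        exact_mod_cast this
      have hs1 : (1:ℝ) ≤ Real.sqrt k := by
        rw [show (1:ℝ) = Real.sqrt 1 by simp]
        exact Real.sqrt_le_sqrt hk1
      have hs0 : 0 < Real.sqrt k := lt_of_lt_of_le one_pos hs1
      have hfa : 4 / (5 * Real.sqrt k) ≤ 1 := by
        rw [div_le_one (by positivity)]
        nlinarith
      have hfan : 0 ≤ 4 / (5 * Real.sqrt k) := by positivity
      have h5 : 4 / (5 * Real.sqrt k) * (1 - η) ≤ 1 := by nlinarith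
      have h6 : 0 ≤ 4 / (5 * Real.sqrt k) * (1 - η) := by
        apply mul_nonneg hfan; linarith
      nlinarith [mul_le_mul_of_nonneg_right h5 h0]
  -- main case
  set L := longestEdge vt with hLdef
  set Θ := thickness vt with hTdef
  have hk1 : (1:ℝ) ≤ (k:ℝ) := by
    have : 1 ≤ k := Nat.one_le_iff_ne_zero.2 hk
    exact_mod_cast this
  have hkpos : (0:ℝ) < (k:ℝ) := lt_of_lt_of_le one_pos hk1
  have hTnn : 0 ≤ Θ := AES.thickness_nonneg vt
  have hθpos : 0 < Θ := by
    rcases lt_or_eq_of_le hTnn with h | h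
    · exact h
    · exact absurd (by rw [← h]; ring) hC
  have hLnn : 0 ≤ L := AES.longestEdge_nonneg vt
  have hLpos : 0 < L := by
    rcases lt_or_eq_of_le hLnn with h | h
    · exact h
    · exfalso
      have : Θ = 0 := by
        rw [hTdef, thickness, if_neg hk, ← hLdef, ← h]
        simp
      exact absurd this (ne_of_gt hθpos)
  have hthick_eq : Θ = sInf (Set.range (altitude vt)) / (k * L) := by
    rw [hTdef, thickness, if_neg hk]
  have hInfAlt : sInf (Set.range (altitude vt)) = Θ * (k * L) := by
    rw [hthick_eq]
    field_simp
  have hAlt : ∀ i, (k:ℝ) * Θ * L ≤ altitude vt i := by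
    intro i
    have := AES.sInf_alt_le vt i
    rw [hInfAlt] at this
    nlinarith
  obtain ⟨i1, hi1⟩ : ∃ i : Fin (k+1), i ≠ 0 :=
    ⟨⟨1, by omega⟩, fun h => by simpa using congrArg Fin.val h⟩
  have hΘle : Θ ≤ 1 := by
    have h1 : altitude vt 0 ≤ dist (vt 0) (vt i1) :=
      Metric.infDist_le_dist_of_mem (subset_affineSpan ℝ _ ⟨i1, hi1, rfl⟩)
    have h2 : dist (vt 0) (vt i1) ≤ L := AES.dist_le_longestEdge vt 0 i1
    have h3 := hAlt 0
    have h4 : Θ * ((k:ℝ) * L) ≤ 1 * ((k:ℝ) * L) := by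
      nlinarith [mul_nonneg (sub_nonneg.2 hk1) hLnn]
    exact le_of_mul_le_mul_right h4 (by positivity)
  have hC₀nn : 0 ≤ C₀ := by rw [hC₀]; positivity
  have hC₀le : C₀ ≤ 1/4 := by
    rw [hC₀]
    nlinarith
  -- distances and lengths
  set d : Fin (k+1) → Fin (k+1) → ℝ := fun i j => dist (vt i) (vt j) with hd
  set ℓ' : Fin (k+1) → Fin (k+1) → ℝ := fun i j => if i = j then 0 else ℓ i j with hℓ'
  have hℓ'symm : ∀ i j, ℓ' i j = ℓ' j i := by
    intro i j
    simp only [hℓ']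
    rcases eq_or_ne i j with rfl | hij
    · simp
    · rw [if_neg hij, if_neg (Ne.symm hij), hsymm]
  have hℓ'nn : ∀ i j, 0 ≤ ℓ' i j := by
    intro i j
    simp only [hℓ']
    rcases eq_or_ne i j with rfl | hij
    · simp
    · rw [if_neg hij]; exact le_of_lt (hpos i j hij)
  have herr : ∀ i j, |ℓ' i j - d i j| ≤ C₀ * L := by
    intro i j
    rcases eq_or_ne i j with rfl | hij
    · simp only [hℓ', hd, if_pos rfl, dist_self, sub_zero, abs_zero]
      positivity
    · simp only [hℓ', hd, if_neg hij]
      rcases lt_or_gt_of_ne hij with h | h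
      · rw [abs_sub_comm]; exact hdist i j h
      · rw [abs_sub_comm, dist_comm, hsymm i j]; exact hdist j i h
  have hdle : ∀ i j, d i j ≤ L := fun i j => AES.dist_le_longestEdge vt i j
  have hdnn : ∀ i j, 0 ≤ d i j := fun i j => dist_nonneg
  have hℓ'le : ∀ i j, ℓ' i j ≤ (1 + C₀) * L := by
    intro i j
    have h1 := herr i j
    have h2 := abs_le.1 h1
    have := hdle i j
    nlinarith [h2.2]
  -- Gram entries
  set g : Fin (k+1) → Fin (k+1) → Fin (k+1) → ℝ :=
    fun b i j => (ℓ' b i ^ 2 + ℓ' b j ^ 2 - ℓ' i j ^ 2) / 2 with hg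
  set gd : Fin (k+1) → Fin (k+1) → Fin (k+1) → ℝ :=
    fun b i j => (d b i ^ 2 + d b j ^ 2 - d i j ^ 2) / 2 with hgd
  set M : ℝ := 27/8 * C₀ * L^2 with hM
  have hMnn : 0 ≤ M := by rw [hM]; positivity
  have hc_nn' : 0 ≤ η * Θ^2 * L^2 := by positivity
  have hM_bound : M ≤ η * Θ^2 * L^2 := by
    rw [hM, hC₀]; nlinarith
  have habs2 : ∀ i j, |ℓ' i j ^ 2 - d i j ^ 2| ≤ 9/4 * C₀ * L^2 := by
    intro i j
    have hsum_nn : 0 ≤ ℓ' i j + d i j := add_nonneg (hℓ'nn i j) (hdnn i j)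
    have hCL : C₀ * L ≤ 1/4 * L := mul_le_mul_of_nonneg_right hC₀le hLnn
    have hsum_le : ℓ' i j + d i j ≤ 9/4 * L := by
      have := hℓ'le i j; have := hdle i j; nlinarith
    have hid : ℓ' i j ^ 2 - d i j ^ 2 = (ℓ' i j - d i j) * (ℓ' i j + d i j) := by ring
    rw [hid, abs_mul]
    calc |ℓ' i j - d i j| * |ℓ' i j + d i j| ≤ (C₀ * L) * (9/4 * L) := by
          apply mul_le_mul (herr i j) _ (abs_nonneg _) (by positivity)
          rw [abs_of_nonneg hsum_nn]; exact hsum_le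
      _ = 9/4 * C₀ * L^2 := by ring
  have hgram : ∀ b i j, |g b i j - gd b i j| ≤ M := by
    intro b i j
    have h1 := abs_le.1 (habs2 b i)
    have h2 := abs_le.1 (habs2 b j)
    have h3 := abs_le.1 (habs2 i j)
    rw [hg, hgd, hM, abs_le]
    constructor <;> [linarith [h1.1, h2.1, h3.2]; linarith [h1.2, h2.2, h3.1]]
  -- the quadratic form comparison
  have hnormvt : ∀ (b : Fin (k+1)) (x : Fin (k+1) → ℝ),
      ‖∑ j, x j • (vt j - vt b)‖^2 = ∑ i, ∑ j, x i * x j * gd b i j := by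
    intro b x
    rw [AES.normsq_comb]
  have hQdiff : ∀ (b : Fin (k+1)) (x : Fin (k+1) → ℝ), x b = 0 →
      |(∑ i, ∑ j, x i * x j * g b i j) - ‖∑ j, x j • (vt j - vt b)‖^2|
        ≤ M * ((k:ℝ) * ∑ j, x j ^ 2) := by
    intro b x hxb
    rw [hnormvt]
    have hcomb : (∑ i, ∑ j, x i * x j * g b i j) - (∑ i, ∑ j, x i * x j * gd b i j)
        = ∑ i, ∑ j, x i * x j * (g b i j - gd b i j) := by
      rw [← Finset.sum_sub_distrib]
      refine Finset.sum_congr rfl fun i _ => ?_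
      rw [← Finset.sum_sub_distrib]
      refine Finset.sum_congr rfl fun j _ => ?_
      ring
    rw [hcomb]
    calc |∑ i, ∑ j, x i * x j * (g b i j - gd b i j)| ≤ M * (∑ i, |x i|)^2 :=
          AES.quad_pert x _ M hMnn (fun i j => hgram b i j)
      _ ≤ M * ((k:ℝ) * ∑ j, x j ^ 2) :=
          mul_le_mul_of_nonneg_left (AES.sum_abs_sq_le x b hxb) hMnn
  -- key lower bound for vt
  have hKeyVT : ∀ (b : Fin (k+1)) (x : Fin (k+1) → ℝ), x b = 0 →
      Real.sqrt k * (Θ * L) * Real.sqrt (∑ j, x j ^ 2) ≤ ‖∑ j, x j • (vt j - vt b)‖ := by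
    intro b x hxb
    by_cases hT0 : ∑ j, x j ^ 2 = 0
    · rw [hT0, Real.sqrt_zero, mul_zero]; exact norm_nonneg _
    have hne : (Finset.univ.erase b).Nonempty := by
      rw [← Finset.card_pos, Finset.card_erase_of_mem (Finset.mem_univ b)]
      simp only [Finset.card_univ, Fintype.card_fin]
      omega
    obtain ⟨i, hi_mem, hi_max⟩ :=
      Finset.exists_max_image (Finset.univ.erase b) (fun j => |x j|) hne
    have hib : i ≠ b := (Finset.mem_erase.1 hi_mem).1
    have hsum_le : ∑ j, x j ^ 2 ≤ (k:ℝ) * x i ^ 2 := by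
      have h1 : ∑ j, x j ^ 2 = ∑ j ∈ Finset.univ.erase b, x j ^ 2 := by
        rw [← Finset.add_sum_erase _ _ (Finset.mem_univ b), hxb]
        norm_num
      rw [h1]
      calc ∑ j ∈ Finset.univ.erase b, x j ^ 2 ≤ ∑ _j ∈ Finset.univ.erase b, x i ^ 2 := by
            refine Finset.sum_le_sum fun j hj => ?_
            have := hi_max j hj
            calc x j ^ 2 = |x j| ^ 2 := (sq_abs _).symm
              _ ≤ |x i| ^ 2 := by nlinarith [abs_nonneg (x j)]
              _ = x i ^ 2 := sq_abs _
        _ = (k:ℝ) * x i ^ 2 := by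
            rw [Finset.sum_const, Finset.card_erase_of_mem (Finset.mem_univ b)]
            simp only [Finset.card_univ, Fintype.card_fin]
            rw [nsmul_eq_mul]
            norm_num
    have hsqrt : Real.sqrt (∑ j, x j ^ 2) ≤ Real.sqrt k * |x i| := by
      rw [← Real.sqrt_sq_eq_abs, ← Real.sqrt_mul (le_of_lt hkpos)]
      exact Real.sqrt_le_sqrt hsum_le
    have hcomb := AES.comb_ge_altitude vt b i hib x
    have halt := hAlt i
    have hmss : Real.sqrt k * Real.sqrt k = (k:ℝ) := Real.mul_self_sqrt (le_of_lt hkpos)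
    calc Real.sqrt k * (Θ * L) * Real.sqrt (∑ j, x j ^ 2)
        ≤ Real.sqrt k * (Θ * L) * (Real.sqrt k * |x i|) := by
          apply mul_le_mul_of_nonneg_left hsqrt (by positivity)
      _ = (Real.sqrt k * Real.sqrt k) * (Θ * L) * |x i| := by ring
      _ = (k:ℝ) * Θ * L * |x i| := by rw [hmss]; ring
      _ ≤ altitude vt i * |x i| := by
          apply mul_le_mul_of_nonneg_right halt (abs_nonneg _)
      _ = |x i| * altitude vt i := mul_comm _ _
      _ ≤ ‖∑ j, x j • (vt j - vt b)‖ := hcomb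
  -- extension of coefficient vectors
  have hext_sum : ∀ (u : Fin (k+1) → EuclideanSpace ℝ (Fin n)) (y : Fin k → ℝ),
      ∑ j : Fin (k+1), (Fin.cases 0 y : Fin (k+1) → ℝ) j • (u j - u 0)
        = ∑ j : Fin k, y j • (u j.succ - u 0) := by
    intro u y
    rw [Fin.sum_univ_succ]
    simp
  have hext_sq : ∀ (y : Fin k → ℝ),
      ∑ j : Fin (k+1), ((Fin.cases 0 y : Fin (k+1) → ℝ) j) ^ 2 = ∑ j : Fin k, (y j) ^ 2 := by
    intro y
    rw [Fin.sum_univ_succ]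
    simp
  have hkn : k ≤ n := by
    have hli : LinearIndependent ℝ (fun j : Fin k => vt j.succ - vt 0) := by
      rw [Fintype.linearIndependent_iff]
      intro gc hg i
      set x : Fin (k+1) → ℝ := Fin.cases 0 gc with hx
      have hxb : x 0 = 0 := rfl
      have hkey := hKeyVT 0 x hxb
      have h0 : ∑ j : Fin (k+1), x j • (vt j - vt 0) = 0 := by
        rw [hx, hext_sum vt gc]; exact hg
      rw [h0, norm_zero] at hkey
      have hsk : 0 < Real.sqrt k := Real.sqrt_pos.2 hkpos
      have h2 : Real.sqrt (∑ j, x j ^ 2) ≤ 0 := by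
        by_contra hcon
        push_neg at hcon
        have := mul_pos (mul_pos hsk (mul_pos hθpos hLpos)) hcon
        linarith
      have h3 : ∑ j, x j ^ 2 = 0 := by
        have := Real.sqrt_nonneg (∑ j, x j ^ 2)
        have h4 : Real.sqrt (∑ j, x j ^ 2) = 0 := le_antisymm h2 this
        have h5 := Real.sq_sqrt (Finset.sum_nonneg fun j (_ : j ∈ Finset.univ) => sq_nonneg (x j))
        rw [h4] at h5
        simpa using h5.symm
      have h6 := (Finset.sum_eq_zero_iff_of_nonneg (fun j _ => sq_nonneg (x j))).1 h3
      have h7 := h6 i.succ (Finset.mem_univ _)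
      have h8 : x i.succ = gc i := by rw [hx]; simp
      rw [h8] at h7
      exact pow_eq_zero_iff (by norm_num) |>.1 h7
    have hcard := hli.fintype_card_le_finrank
    simpa [finrank_euclideanSpace_fin] using hcard
  have hQlow : ∀ (b : Fin (k+1)) (x : Fin (k+1) → ℝ), x b = 0 →
      (1-η)^2 * ((k:ℝ) * (Θ*L)^2) * (∑ j, x j ^ 2) ≤ ∑ i, ∑ j, x i * x j * g b i j := by
    intro b x hxb
    have h1 := hQdiff b x hxb
    have h2 := hKeyVT b x hxb
    have hTnn' : 0 ≤ ∑ j, x j ^ 2 := Finset.sum_nonneg fun j _ => sq_nonneg _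
    set T := ∑ j, x j ^ 2 with hT
    have hNsq : (k:ℝ) * (Θ*L)^2 * T ≤ ‖∑ j, x j • (vt j - vt b)‖^2 := by
      have hl : 0 ≤ Real.sqrt k * (Θ * L) * Real.sqrt T := by positivity
      have hmul := mul_le_mul h2 h2 hl (norm_nonneg _)
      have e1 : Real.sqrt k * Real.sqrt k = (k:ℝ) := Real.mul_self_sqrt (le_of_lt hkpos)
      have e2 : Real.sqrt T * Real.sqrt T = T := Real.mul_self_sqrt hTnn'
      have hid : (Real.sqrt k * (Θ * L) * Real.sqrt T) * (Real.sqrt k * (Θ * L) * Real.sqrt T)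
          = (Real.sqrt k * Real.sqrt k) * (Θ * L)^2 * (Real.sqrt T * Real.sqrt T) := by ring
      rw [e1, e2] at hid
      calc (k:ℝ) * (Θ*L)^2 * T
          = (Real.sqrt k * (Θ * L) * Real.sqrt T) * (Real.sqrt k * (Θ * L) * Real.sqrt T) := by
            rw [hid]
        _ ≤ ‖∑ j, x j • (vt j - vt b)‖ * ‖∑ j, x j • (vt j - vt b)‖ := hmul
        _ = ‖∑ j, x j • (vt j - vt b)‖^2 := (sq _).symm
    have habs := abs_le.1 h1
    have h3 : M * ((k:ℝ)*T) ≤ (η * Θ^2 * L^2) * ((k:ℝ)*T) :=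
      mul_le_mul_of_nonneg_right hM_bound (by positivity)
    have h5 : (1-η)^2 * ((k:ℝ)*(Θ*L)^2) * T ≤ (1-η) * ((k:ℝ)*(Θ*L)^2) * T := by
      have he : (1-η)^2 ≤ 1-η := by nlinarith
      apply mul_le_mul_of_nonneg_right (mul_le_mul_of_nonneg_right he (by positivity)) hTnn'
    have hre : (1-η) * ((k:ℝ)*(Θ*L)^2) * T
        = (k:ℝ)*(Θ*L)^2*T - (η*Θ^2*L^2)*((k:ℝ)*T) := by ring
    linarith [habs.1]
  -- Gram matrix and factorization
  set G : Matrix (Fin k) (Fin k) ℝ := Matrix.of (fun i j => g 0 i.succ j.succ) with hG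
  have hgsymm : ∀ b i j, g b i j = g b j i := by
    intro b i j
    rw [hg]
    simp only
    rw [hℓ'symm i j]
    ring
  have hdot : ∀ y : Fin k → ℝ,
      dotProduct y (G.mulVec y) = ∑ i : Fin k, ∑ j : Fin k, y i * y j * g 0 i.succ j.succ := by
    intro y
    rw [dotProduct]
    refine Finset.sum_congr rfl fun i _ => ?_
    rw [Matrix.mulVec, dotProduct, Finset.mul_sum]
    refine Finset.sum_congr rfl fun j _ => ?_
    rw [hG]
    simp only [Matrix.of_apply]
    ring
  have hqext : ∀ y : Fin k → ℝ,
      (∑ i, ∑ j, (Fin.cases 0 y : Fin (k+1) → ℝ) i * (Fin.cases 0 y : Fin (k+1) → ℝ) j * g 0 i j)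
        = ∑ i : Fin k, ∑ j : Fin k, y i * y j * g 0 i.succ j.succ := by
    intro y
    rw [Fin.sum_univ_succ]
    simp only [Fin.cases_zero, zero_mul, Finset.sum_const_zero, zero_add]
    refine Finset.sum_congr rfl fun i _ => ?_
    rw [Fin.sum_univ_succ]
    simp [Fin.cases_succ, Fin.cases_zero]
  have hGpsd : G.PosSemidef := by
    refine Matrix.posSemidef_iff_dotProduct_mulVec.mpr ⟨?_, ?_⟩
    · show G.conjTranspose = G
      ext i j
      rw [Matrix.conjTranspose_apply, hG]
      simp only [Matrix.of_apply, star_trivial]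
      exact (hgsymm 0 i.succ j.succ).symm
    · intro y
      have hxb' : (Fin.cases 0 y : Fin (k+1) → ℝ) 0 = 0 := rfl
      have hlow := hQlow 0 (Fin.cases 0 y) hxb'
      have hnn : 0 ≤ (1-η)^2 * ((k:ℝ) * (Θ*L)^2) * (∑ j : Fin (k+1), ((Fin.cases 0 y : Fin (k+1) → ℝ) j) ^ 2) := by
        positivity
      have : (0:ℝ) ≤ dotProduct (star y) (G.mulVec y) := by
        rw [star_trivial, hdot, ← hqext]
        linarith
      simpa using this
  obtain ⟨B, hB⟩ := AES.psd_factor hGpsd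
  set v : Fin (k+1) → EuclideanSpace ℝ (Fin n) :=
    fun i => Fin.cases (vt 0) (fun j => vt 0 + AES.embv k (fun r => B r j)) i with hv
  have hvinner : ∀ i j : Fin k,
      (inner ℝ (AES.embv k (fun r => B r i) : EuclideanSpace ℝ (Fin n))
        (AES.embv k (fun r => B r j)) : ℝ) = G i j := by
    intro i j
    rw [AES.embv_inner hkn, hB]
    rw [Matrix.mul_apply]
    refine Finset.sum_congr rfl fun r _ => ?_
    rw [Matrix.conjTranspose_apply]
    simp
  have hGdiag : ∀ i : Fin k, G i i = ℓ' 0 i.succ ^ 2 := by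
    intro i
    rw [hG]
    simp only [Matrix.of_apply, hg]
    have : ℓ' i.succ i.succ = 0 := by rw [hℓ']; simp
    rw [this]
    ring
  have hvd : ∀ i j, dist (v i) (v j) ^ 2 = ℓ' i j ^ 2 := by
    have h0s : ∀ j : Fin k, dist (v 0) (v j.succ) ^ 2 = ℓ' 0 j.succ ^ 2 := by
      intro j
      have : v 0 - v j.succ = -(AES.embv k (fun r => B r j)) := by
        show vt 0 - (vt 0 + AES.embv k (fun r => B r j)) = _
        abel
      rw [dist_eq_norm, this, norm_neg, ← real_inner_self_eq_norm_sq, hvinner, hGdiag]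
    have hss : ∀ i j : Fin k, dist (v i.succ) (v j.succ) ^ 2 = ℓ' i.succ j.succ ^ 2 := by
      intro i j
      have heq : v i.succ - v j.succ
          = AES.embv k (fun r => B r i) - AES.embv k (fun r => B r j) := by
        show vt 0 + AES.embv k (fun r => B r i) - (vt 0 + AES.embv k (fun r => B r j)) = _
        abel
      rw [dist_eq_norm, heq, norm_sub_sq_real, ← real_inner_self_eq_norm_sq,
        ← real_inner_self_eq_norm_sq, hvinner, hvinner, hvinner, hGdiag, hGdiag, hG]
      simp only [Matrix.of_apply, hg]
      have hd1 : ℓ' 0 i.succ = ℓ' i.succ 0 := hℓ'symm _ _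
      ring
    intro i j
    refine Fin.cases ?_ ?_ i
    · refine Fin.cases ?_ ?_ j
      · simp only [dist_self, hℓ']
        simp
      · intro jj
        exact h0s jj
    · intro ii
      refine Fin.cases ?_ ?_ j
      · rw [dist_comm, hℓ'symm]
        exact h0s ii
      · intro jj
        exact hss ii jj
  have hvdist : ∀ i j, dist (v i) (v j) = ℓ' i j := by
    intro i j
    rw [← Real.sqrt_sq dist_nonneg, hvd i j, Real.sqrt_sq (hℓ'nn i j)]
  have hnormv : ∀ (b : Fin (k+1)) (x : Fin (k+1) → ℝ),
      ‖∑ j, x j • (v j - v b)‖^2 = ∑ i, ∑ j, x i * x j * g b i j := by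
    intro b x
    rw [AES.normsq_comb]
    refine Finset.sum_congr rfl fun i _ => Finset.sum_congr rfl fun j _ => ?_
    rw [hvdist, hvdist, hvdist, hg]
  refine ⟨v, ?_, ?_, ?_⟩
  · intro i j hij
    rw [hvdist, hℓ']
    simp only [if_neg hij]
  · -- smallest singular value bound
    rw [ge_iff_le, smallestSing]
    have hbdd : BddBelow { r : ℝ | ∃ x : EuclideanSpace ℝ (Fin k), ‖x‖ = 1 ∧
        r = ‖(EuclideanSpace.equiv (Fin n) ℝ).symm ((edgeMat vt).mulVec (EuclideanSpace.equiv (Fin k) ℝ x))‖ } :=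
      ⟨0, fun z hz => by obtain ⟨yy, hyy, rfl⟩ := hz; exact norm_nonneg _⟩
    have hy0 : ∃ y : EuclideanSpace ℝ (Fin k), ‖y‖ = 1 := by
      refine ⟨EuclideanSpace.single ⟨0, by omega⟩ 1, ?_⟩
      rw [EuclideanSpace.norm_single]
      norm_num
    have hunit_sum : ∀ y : EuclideanSpace ℝ (Fin k), ‖y‖ = 1 → ∑ j : Fin k, (y j)^2 = 1 := by
      intro y hy
      have h1 := EuclideanSpace.norm_eq y
      rw [hy] at h1
      have hS : 0 ≤ ∑ i : Fin k, ‖y i‖^2 := by positivity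
      have h2 : (1:ℝ) = ∑ i : Fin k, ‖y i‖^2 := by
        have h4 : (1:ℝ)^2 = Real.sqrt (∑ i : Fin k, ‖y i‖^2) ^ 2 := by rw [h1]
        rw [Real.sq_sqrt hS] at h4
        simpa using h4
      have h3 : ∑ j : Fin k, (y j)^2 = ∑ j : Fin k, ‖y j‖^2 :=
        Finset.sum_congr rfl fun j _ => by rw [Real.norm_eq_abs, sq_abs]
      rw [h3]
      exact h2.symm
    apply le_csInf
    · obtain ⟨y, hy⟩ := hy0
      exact ⟨_, y, hy, rfl⟩
    · rintro r ⟨y, hy, rfl⟩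
      rw [AES.norm_mulVec v y]
      set x : Fin (k+1) → ℝ := Fin.cases 0 (fun j => y j) with hx
      have hxb : x 0 = 0 := rfl
      have hsumv : ∑ j : Fin k, y j • (v j.succ - v 0) = ∑ j : Fin (k+1), x j • (v j - v 0) :=
        (hext_sum v (fun j => y j)).symm
      rw [hsumv]
      have hsq : ∑ j : Fin (k+1), x j ^ 2 = 1 := by
        rw [hx, hext_sq]
        exact hunit_sum y hy
      have hnv := hnormv 0 x
      have hd := hQdiff 0 x hxb
      have ht := hKeyVT 0 x hxb
      set t := ‖∑ j : Fin (k+1), x j • (vt j - vt 0)‖ with htdef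
      have hst_le_t : smallestSing (edgeMat vt) ≤ t := by
        apply csInf_le hbdd
        refine ⟨y, hy, ?_⟩
        rw [AES.norm_mulVec vt y, htdef, ← hext_sum vt (fun j => y j)]
      have hst_nonneg : 0 ≤ smallestSing (edgeMat vt) := AES.smallestSing_nonneg _
      have htk : Real.sqrt k * (Θ*L) ≤ t := by
        rw [hsq, Real.sqrt_one, mul_one] at ht
        exact ht
      have ht2 : (k:ℝ)*(Θ*L)^2 ≤ t^2 := by
        have hlnn : 0 ≤ Real.sqrt k * (Θ*L) := by positivity
        have := mul_le_mul htk htk hlnn (norm_nonneg _)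
        have e1 : Real.sqrt k * Real.sqrt k = (k:ℝ) := Real.mul_self_sqrt (le_of_lt hkpos)
        nlinarith [this]
      rw [hsq, mul_one] at hd
      have habs := abs_le.1 hd
      have hq_ge : t^2 - M * k ≤ ‖∑ j : Fin (k+1), x j • (v j - v 0)‖^2 := by
        rw [hnv]
        have := habs.1
        linarith
      have hMk : M * (k:ℝ) ≤ (2*η - η^2) * ((k:ℝ) * (Θ*L)^2) := by
        have h2η : η * Θ^2 * L^2 * (k:ℝ) ≤ (2*η - η^2) * ((k:ℝ) * (Θ*L)^2) := by
          nlinarith [mul_nonneg (mul_nonneg (mul_nonneg hη0 (sub_nonneg.2 hη1))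
            (mul_nonneg (sq_nonneg Θ) (sq_nonneg L))) (le_of_lt hkpos)]
        have := mul_le_mul_of_nonneg_right hM_bound (le_of_lt hkpos)
        linarith
      have h2η' : 0 ≤ 2*η - η^2 := by nlinarith
      have hst2 : smallestSing (edgeMat vt)^2 ≤ t^2 := by
        nlinarith [hst_le_t, hst_nonneg]
      have hfinal : ((1-η) * smallestSing (edgeMat vt))^2
          ≤ ‖∑ j : Fin (k+1), x j • (v j - v 0)‖^2 := by
        have p1 : (1-η)^2 * smallestSing (edgeMat vt)^2 ≤ (1-η)^2 * t^2 :=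
          mul_le_mul_of_nonneg_left hst2 (sq_nonneg (1-η))
        have p2 : (2*η - η^2) * ((k:ℝ)*(Θ*L)^2) ≤ (2*η - η^2) * t^2 :=
          mul_le_mul_of_nonneg_left ht2 h2η'
        have hid : (1-η)^2 * t^2 = t^2 - (2*η - η^2) * t^2 := by ring
        have hid2 : ((1-η) * smallestSing (edgeMat vt))^2
            = (1-η)^2 * smallestSing (edgeMat vt)^2 := by ring
        rw [hid2]
        linarith [p1, p2, hq_ge, hMk, hid]
      have hc_nn : 0 ≤ (1-η) * smallestSing (edgeMat vt) :=
        mul_nonneg (by linarith) hst_nonneg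
      calc (1-η) * smallestSing (edgeMat vt)
          = Real.sqrt (((1-η) * smallestSing (edgeMat vt))^2) := (Real.sqrt_sq hc_nn).symm
        _ ≤ Real.sqrt (‖∑ j : Fin (k+1), x j • (v j - v 0)‖^2) := Real.sqrt_le_sqrt hfinal
        _ = ‖∑ j : Fin (k+1), x j • (v j - v 0)‖ := Real.sqrt_sq (norm_nonneg _)
  · -- thickness bound
    have e1 : Real.sqrt k * Real.sqrt k = (k:ℝ) := Real.mul_self_sqrt (le_of_lt hkpos)
    have hs : 0 < Real.sqrt k := Real.sqrt_pos.2 hkpos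
    have hcnn' : 0 ≤ (1-η) * (Real.sqrt k * (Θ*L)) :=
      mul_nonneg (by linarith) (by positivity)
    have hAltv : ∀ i, (1-η) * (Real.sqrt k * (Θ*L)) ≤ altitude v i := by
      intro i
      obtain ⟨b, hbi⟩ : ∃ b : Fin (k+1), i ≠ b := by
        rcases eq_or_ne i 0 with rfl | h
        · exact ⟨i1, Ne.symm hi1⟩
        · exact ⟨0, h⟩
      apply AES.altitude_ge v b i hbi
      intro x hxb hxi
      have hq := hQlow b x hxb
      have hn := hnormv b x
      have hsq_ge : (1:ℝ) ≤ ∑ j, x j ^ 2 := by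
        have h1 : x i ^ 2 ≤ ∑ j, x j ^ 2 :=
          Finset.single_le_sum (fun j _ => sq_nonneg (x j)) (Finset.mem_univ i)
        rw [hxi] at h1
        simpa using h1
      have hlow : ((1-η) * (Real.sqrt k * (Θ*L)))^2 ≤ ‖∑ j, x j • (v j - v b)‖^2 := by
        rw [hn]
        have e2 : Real.sqrt k ^ 2 = (k:ℝ) := Real.sq_sqrt (le_of_lt hkpos)
        have expand : ((1-η) * (Real.sqrt k * (Θ*L)))^2
            = (1-η)^2 * (Real.sqrt k ^ 2 * (Θ*L)^2) := by ring
        rw [expand, e2]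
        nlinarith [hq, hsq_ge,
          mul_nonneg (sq_nonneg (1-η)) (by positivity : (0:ℝ) ≤ (k:ℝ) * (Θ*L)^2)]
      calc (1-η) * (Real.sqrt k * (Θ*L))
          = Real.sqrt (((1-η) * (Real.sqrt k * (Θ*L)))^2) := (Real.sqrt_sq hcnn').symm
        _ ≤ Real.sqrt (‖∑ j, x j • (v j - v b)‖^2) := Real.sqrt_le_sqrt hlow
        _ = ‖∑ j, x j • (v j - v b)‖ := Real.sqrt_sq (norm_nonneg _)
    have hInfv : (1-η) * (Real.sqrt k * (Θ*L)) ≤ sInf (Set.range (altitude v)) := by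
      apply le_csInf (Set.range_nonempty _)
      rintro z ⟨i, rfl⟩
      exact hAltv i
    have hLv_le : longestEdge v ≤ (1 + C₀) * L := by
      apply AES.longestEdge_le
      intro i j
      rw [hvdist]
      exact hℓ'le i j
    have h0i1 : (0 : Fin (k+1)) ≠ i1 := Ne.symm hi1
    have hLv_pos : 0 < longestEdge v := by
      have h01 : dist (v 0) (v i1) = ℓ' 0 i1 := hvdist 0 i1
      have hl : 0 < ℓ' 0 i1 := by
        rw [hℓ']
        simp only [if_neg h0i1]
        exact hpos 0 i1 h0i1
      calc (0:ℝ) < ℓ' 0 i1 := hl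
        _ = dist (v 0) (v i1) := h01.symm
        _ ≤ longestEdge v := AES.dist_le_longestEdge v 0 i1
    rw [ge_iff_le, thickness, if_neg hk]
    have hden_pos : 0 < (k:ℝ) * longestEdge v := mul_pos hkpos hLv_pos
    have hstep1 : ((1-η) * (Real.sqrt k * (Θ*L))) / ((k:ℝ) * ((1+C₀)*L))
        ≤ sInf (Set.range (altitude v)) / ((k:ℝ) * longestEdge v) := by
      apply div_le_div₀ (le_trans hcnn' hInfv) hInfv hden_pos
      exact mul_le_mul_of_nonneg_left hLv_le (le_of_lt hkpos)
    refine le_trans ?_ hstep1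
    have hre : 4 / (5 * Real.sqrt k) * (1 - η) * Θ = (4*((1-η)*Θ)) / (5 * Real.sqrt k) := by
      ring
    rw [hre, div_le_div_iff₀ (by positivity) (by positivity)]
    have hA : 0 ≤ (1-η)*Θ*L*(k:ℝ) :=
      mul_nonneg (mul_nonneg (mul_nonneg (by linarith) (le_of_lt hθpos))
        (le_of_lt hLpos)) (le_of_lt hkpos)
    have hkey : 0 ≤ ((1-η)*Θ*L*(k:ℝ)) * (1 - 4*C₀) := mul_nonneg hA (by linarith)
    have hRHS : (1-η)*(Real.sqrt k*(Θ*L))*(5*Real.sqrt k)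
        = 5*((Real.sqrt k*Real.sqrt k)*((1-η)*(Θ*L))) := by ring
    rw [hRHS, e1]
    linarith [hkey]

end
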